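/- arXiv:2310.15458 — 2 statements merged into one kernel-verified Lean document; each statement's English description precedes it below -/
import Mathlib

section
/- Let R, S, N, F be finite index sets (the 'redundant', 'skeleton', 'near-field', and 'far-field' indices) and let A be a complex matrix indexed by the disjoint union R ⊕ S ⊕ N ⊕ F. Suppose T is a complex S × R matrix satisfying the exact interpolation relations A_{F,R} = A_{F,S}·T and A_{R,F} = Tᴴ·A_{S,F}. Define the sparsification matrix Q, indexed by R ⊕ S ⊕ N ⊕ F, to be the identity matrix except that its (S,R) block equals −T. Then the matrix B = Qᴴ·A·Q satisfies: (i) B_{F,R} = 0 and B_{R,F} = 0 (the coupling between the redundant and far-field indices vanishes), and (ii) B_{I,J} = A_{I,J} for every pair of blocks I, J ∈ {S, N, F} (all blocks not involving R are unchanged). -/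
open Matrix

/-- Embedding of the redundant indices `R` into `R ⊕ S ⊕ N ⊕ F`. -/
def inR {R S N F : Type*} (r : R) : R ⊕ S ⊕ N ⊕ F := Sum.inl r

/-- Embedding of the skeleton indices `S` into `R ⊕ S ⊕ N ⊕ F`. -/
def inS {R S N F : Type*} (s : S) : R ⊕ S ⊕ N ⊕ F := Sum.inr (Sum.inl s)

/-- Embedding of the near-field indices `N` into `R ⊕ S ⊕ N ⊕ F`. -/
def inN {R S N F : Type*} (n : N) : R ⊕ S ⊕ N ⊕ F := Sum.inr (Sum.inr (Sum.inl n))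

/-- Embedding of the far-field indices `F` into `R ⊕ S ⊕ N ⊕ F`. -/
def inF {R S N F : Type*} (f : F) : R ⊕ S ⊕ N ⊕ F := Sum.inr (Sum.inr (Sum.inr f))

/-- The sparsification matrix: identity except that the `(S, R)` block equals `-T`. -/
def sparsQ {R S N F : Type*} [DecidableEq R] [DecidableEq S] [DecidableEq N] [DecidableEq F]
    (T : Matrix S R ℂ) : Matrix (R ⊕ S ⊕ N ⊕ F) (R ⊕ S ⊕ N ⊕ F) ℂ :=
  1 + Matrix.of (fun i j =>
    match i, j with
    | Sum.inr (Sum.inl s), Sum.inl r => -T s r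
    | _, _ => 0)

set_option linter.unusedSectionVars false

section Aux
variable {R S N F : Type*} [Fintype R] [Fintype S] [Fintype N] [Fintype F]
  [DecidableEq R] [DecidableEq S] [DecidableEq N] [DecidableEq F]

/-- The off-diagonal part of `sparsQ`. -/
def sparsE (N F : Type*) {R S : Type*} (T : Matrix S R ℂ) :
    Matrix (R ⊕ S ⊕ N ⊕ F) (R ⊕ S ⊕ N ⊕ F) ℂ :=
  Matrix.of (fun i j =>
    match i, j with
    | Sum.inr (Sum.inl s), Sum.inl r => -T s r
    | _, _ => 0)

lemma sparsQ_eq (T : Matrix S R ℂ) : sparsQ T = 1 + sparsE N F T := by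
  ext i j
  rcases i with r | s | n | f <;> rcases j with r' | s' | n' | f' <;>
    simp [sparsQ, sparsE, Matrix.add_apply]

lemma mulE_inl (T : Matrix S R ℂ) (M : Matrix (R ⊕ S ⊕ N ⊕ F) (R ⊕ S ⊕ N ⊕ F) ℂ)
    (i : R ⊕ S ⊕ N ⊕ F) (r : R) :
    (M * sparsE N F T) i (Sum.inl r) = -∑ s, M i (Sum.inr (Sum.inl s)) * T s r := by
  simp [mul_apply, sparsE, Fintype.sum_sum_type]

lemma mulE_inr (T : Matrix S R ℂ) (M : Matrix (R ⊕ S ⊕ N ⊕ F) (R ⊕ S ⊕ N ⊕ F) ℂ)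
    (i : R ⊕ S ⊕ N ⊕ F) (j : S ⊕ N ⊕ F) :
    (M * sparsE N F T) i (Sum.inr j) = 0 := by
  simp [mul_apply, sparsE, Fintype.sum_sum_type]

lemma Emul_inl (T : Matrix S R ℂ) (M : Matrix (R ⊕ S ⊕ N ⊕ F) (R ⊕ S ⊕ N ⊕ F) ℂ)
    (r : R) (j : R ⊕ S ⊕ N ⊕ F) :
    ((sparsE N F T)ᴴ * M) (Sum.inl r) j
      = -∑ s, (starRingEnd ℂ) (T s r) * M (Sum.inr (Sum.inl s)) j := by
  simp [mul_apply, sparsE, conjTranspose_apply, Fintype.sum_sum_type]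

lemma Emul_inr (T : Matrix S R ℂ) (M : Matrix (R ⊕ S ⊕ N ⊕ F) (R ⊕ S ⊕ N ⊕ F) ℂ)
    (i : S ⊕ N ⊕ F) (j : R ⊕ S ⊕ N ⊕ F) :
    ((sparsE N F T)ᴴ * M) (Sum.inr i) j = 0 := by
  simp [mul_apply, sparsE, conjTranspose_apply, Fintype.sum_sum_type]

end Aux

theorem sparsification_decouples_redundant_and_far_field
    {R S N F : Type*} [Fintype R] [Fintype S] [Fintype N] [Fintype F]
    [DecidableEq R] [DecidableEq S] [DecidableEq N] [DecidableEq F]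
    (A : Matrix (R ⊕ S ⊕ N ⊕ F) (R ⊕ S ⊕ N ⊕ F) ℂ) (T : Matrix S R ℂ)
    (hFR : A.submatrix inF inR = A.submatrix inF inS * T)
    (hRF : A.submatrix inR inF = Tᴴ * A.submatrix inS inF)
    (B : Matrix (R ⊕ S ⊕ N ⊕ F) (R ⊕ S ⊕ N ⊕ F) ℂ)
    (hB : B = (sparsQ T)ᴴ * A * sparsQ T) :
    B.submatrix inF inR = 0 ∧ B.submatrix inR inF = 0 ∧
    B.submatrix inS inS = A.submatrix inS inS ∧
    B.submatrix inS inN = A.submatrix inS inN ∧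
    B.submatrix inS inF = A.submatrix inS inF ∧
    B.submatrix inN inS = A.submatrix inN inS ∧
    B.submatrix inN inN = A.submatrix inN inN ∧
    B.submatrix inN inF = A.submatrix inN inF ∧
    B.submatrix inF inS = A.submatrix inF inS ∧
    B.submatrix inF inN = A.submatrix inF inN ∧
    B.submatrix inF inF = A.submatrix inF inF := by
  have hBexp : B = A + (sparsE N F T)ᴴ * A + A * sparsE N F T
      + (sparsE N F T)ᴴ * (A * sparsE N F T) := by
    rw [hB, sparsQ_eq]
    simp only [conjTranspose_add, conjTranspose_one, Matrix.add_mul, Matrix.mul_add,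
      Matrix.one_mul, Matrix.mul_one, Matrix.mul_assoc]
    abel
  refine ⟨?_, ?_, ?_, ?_, ?_, ?_, ?_, ?_, ?_, ?_, ?_⟩ <;> ext i j <;>
    simp only [hBexp, submatrix_apply, Matrix.add_apply, Matrix.zero_apply, inR, inS, inN, inF]
  · -- F R
    have h := congrFun (congrFun hFR i) j
    simp only [submatrix_apply, mul_apply, inF, inR, inS] at h
    simp [mulE_inl, Emul_inr, h]
  · -- R F
    have h := congrFun (congrFun hRF i) j
    simp only [submatrix_apply, mul_apply, conjTranspose_apply, inF, inR, inS] at h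
    simp [mulE_inr, Emul_inl, h]
  all_goals simp [mulE_inr, Emul_inr]
end

section
/- Let R, S, N, F be finite index sets and let A be a complex matrix indexed by R ⊕ S ⊕ N ⊕ F. Suppose T is a complex S × R matrix with A_{F,R} = A_{F,S}·T and A_{R,F} = Tᴴ·A_{S,F}, and suppose the matrix X_{R,R} := A_{R,R} − A_{R,S}·T − Tᴴ·A_{S,R} + Tᴴ·A_{S,S}·T is invertible. Then there exist invertible complex matrices V and W, indexed by R ⊕ S ⊕ N ⊕ F, such that V·A·W is the block-diagonal matrix diag(I_R, Ã), where I_R is the identity on R and Ã is a matrix indexed by S ⊕ N ⊕ F whose blocks satisfy Ã_{S,F} = A_{S,F}, Ã_{N,F} = A_{N,F}, Ã_{F,S} = A_{F,S}, Ã_{F,N} = A_{F,N}, and Ã_{F,F} = A_{F,F}. In particular, A⁻¹ exists if and only if Ã⁻¹ exists, and in that case A⁻¹ = W·diag(I_R, Ã⁻¹)·V. -/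
open Matrix

/-- Embedding of `S` into `S ⊕ N ⊕ F`. -/
def jS {S N F : Type*} (s : S) : S ⊕ N ⊕ F := Sum.inl s

/-- Embedding of `N` into `S ⊕ N ⊕ F`. -/
def jN {S N F : Type*} (n : N) : S ⊕ N ⊕ F := Sum.inr (Sum.inl n)

/-- Embedding of `F` into `S ⊕ N ⊕ F`. -/
def jF {S N F : Type*} (f : F) : S ⊕ N ⊕ F := Sum.inr (Sum.inr f)

lemma aux_mulL {R S N F α : Type*} [Fintype S] [Fintype N] [Fintype F]
    (P : Matrix α (S ⊕ N ⊕ F) ℂ) (T : Matrix S R ℂ) :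
    P * (Matrix.fromRows T 0 : Matrix (S ⊕ N ⊕ F) R ℂ) = P.submatrix id jS * T := by
  ext a r
  simp [Matrix.mul_apply, Fintype.sum_sum_type, jS]

lemma aux_Lmul {R S N F α : Type*} [Fintype S] [Fintype N] [Fintype F]
    (P : Matrix (S ⊕ N ⊕ F) α ℂ) (T : Matrix S R ℂ) :
    (Matrix.fromRows T 0 : Matrix (S ⊕ N ⊕ F) R ℂ)ᴴ * P = Tᴴ * P.submatrix jS id := by
  ext r a
  simp [Matrix.mul_apply, Fintype.sum_sum_type, jS, Matrix.conjTranspose_apply]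

lemma aux_isUnit_of_right_inv {n : Type*} [Fintype n] [DecidableEq n]
    {P Q : Matrix n n ℂ} (h : P * Q = 1) : IsUnit P := by
  letI := invertibleOfRightInverse _ _ h
  exact isUnit_of_invertible P

theorem strong_skeletonization_step
    {R S N F : Type*} [Fintype R] [Fintype S] [Fintype N] [Fintype F]
    [DecidableEq R] [DecidableEq S] [DecidableEq N] [DecidableEq F]
    (A : Matrix (R ⊕ S ⊕ N ⊕ F) (R ⊕ S ⊕ N ⊕ F) ℂ) (T : Matrix S R ℂ)
    (hFR : A.submatrix inF inR = A.submatrix inF inS * T)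
    (hRF : A.submatrix inR inF = Tᴴ * A.submatrix inS inF)
    (hXRR : IsUnit (A.submatrix inR inR - A.submatrix inR inS * T
        - Tᴴ * A.submatrix inS inR + Tᴴ * A.submatrix inS inS * T)) :
    ∃ (V W : Matrix (R ⊕ S ⊕ N ⊕ F) (R ⊕ S ⊕ N ⊕ F) ℂ)
      (Atil : Matrix (S ⊕ N ⊕ F) (S ⊕ N ⊕ F) ℂ),
      IsUnit V ∧ IsUnit W ∧
      V * A * W = Matrix.fromBlocks 1 0 0 Atil ∧
      Atil.submatrix jS jF = A.submatrix inS inF ∧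
      Atil.submatrix jN jF = A.submatrix inN inF ∧
      Atil.submatrix jF jS = A.submatrix inF inS ∧
      Atil.submatrix jF jN = A.submatrix inF inN ∧
      Atil.submatrix jF jF = A.submatrix inF inF ∧
      (IsUnit A ↔ IsUnit Atil) ∧
      (IsUnit A → A⁻¹ = W * Matrix.fromBlocks 1 0 0 Atil⁻¹ * V) := by
  classical
  set L : Matrix (S ⊕ N ⊕ F) R ℂ := Matrix.fromRows T 0 with hL
  set X : Matrix R R ℂ := A.submatrix inR inR - A.submatrix inR inS * T
      - Tᴴ * A.submatrix inS inR + Tᴴ * A.submatrix inS inS * T with hX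
  set Bm : Matrix R R ℂ := A.submatrix (Sum.inl) (Sum.inl) with hBm
  set Cm : Matrix R (S ⊕ N ⊕ F) ℂ := A.submatrix (Sum.inl) (Sum.inr) with hCm
  set Dm : Matrix (S ⊕ N ⊕ F) R ℂ := A.submatrix (Sum.inr) (Sum.inl) with hDm
  set Em : Matrix (S ⊕ N ⊕ F) (S ⊕ N ⊕ F) ℂ := A.submatrix (Sum.inr) (Sum.inr) with hEm
  have hXdet : IsUnit X.det := (Matrix.isUnit_iff_isUnit_det X).mp hXRR
  have hXY : X * X⁻¹ = 1 := Matrix.mul_nonsing_inv X hXdet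
  have hYX : X⁻¹ * X = 1 := Matrix.nonsing_inv_mul X hXdet
  set C' : Matrix R (S ⊕ N ⊕ F) ℂ := Cm - Lᴴ * Em with hC'
  set D' : Matrix (S ⊕ N ⊕ F) R ℂ := Dm - Em * L with hD'
  set Atil : Matrix (S ⊕ N ⊕ F) (S ⊕ N ⊕ F) ℂ := Em - D' * (X⁻¹ * C') with hAtil
  have hA : A = Matrix.fromBlocks Bm Cm Dm Em := by
    ext (i | j) (k | l) <;> rfl
  set V1 : Matrix (R ⊕ S ⊕ N ⊕ F) (R ⊕ S ⊕ N ⊕ F) ℂ := Matrix.fromBlocks 1 (-Lᴴ) 0 1 with hV1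
  set W1 : Matrix (R ⊕ S ⊕ N ⊕ F) (R ⊕ S ⊕ N ⊕ F) ℂ := Matrix.fromBlocks 1 0 (-L) 1 with hW1
  set V2 : Matrix (R ⊕ S ⊕ N ⊕ F) (R ⊕ S ⊕ N ⊕ F) ℂ := Matrix.fromBlocks 1 0 (-(D' * X⁻¹)) 1 with hV2
  set W2 : Matrix (R ⊕ S ⊕ N ⊕ F) (R ⊕ S ⊕ N ⊕ F) ℂ := Matrix.fromBlocks 1 (-(X⁻¹ * C')) 0 1 with hW2
  set V3 : Matrix (R ⊕ S ⊕ N ⊕ F) (R ⊕ S ⊕ N ⊕ F) ℂ := Matrix.fromBlocks X⁻¹ 0 0 1 with hV3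
  -- translation lemmas
  have eCL : Cm * L = A.submatrix inR inS * T := by rw [hL, aux_mulL]; rfl
  have eLD : Lᴴ * Dm = Tᴴ * A.submatrix inS inR := by rw [hL, aux_Lmul]; rfl
  have eEL : Em * L = Em.submatrix id jS * T := by rw [hL, aux_mulL]
  have eLE : Lᴴ * Em = Tᴴ * Em.submatrix jS id := by rw [hL, aux_Lmul]
  have eLEL : Lᴴ * Em * L = Tᴴ * A.submatrix inS inS * T := by
    rw [eLE, Matrix.mul_assoc, hL, aux_mulL, ← Matrix.mul_assoc]; rfl
  -- step 1
  have eB : Bm = A.submatrix inR inR := rfl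
  have step1 : V1 * A * W1 = Matrix.fromBlocks X C' D' Em := by
    rw [hV1, hW1, hA, Matrix.fromBlocks_multiply, Matrix.fromBlocks_multiply,
      Matrix.fromBlocks_inj]
    refine ⟨?_, ?_, ?_, ?_⟩
    · simp only [Matrix.one_mul, Matrix.mul_one, Matrix.neg_mul, Matrix.mul_neg,
        Matrix.add_mul]
      rw [eCL, eLD, eLEL, eB, hX]
      abel
    · simp only [Matrix.one_mul, Matrix.mul_one, Matrix.mul_zero, zero_add, add_zero,
        Matrix.neg_mul]
      rw [hC']
      abel
    · simp only [Matrix.one_mul, Matrix.mul_one, Matrix.zero_mul, zero_add, add_zero,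
        Matrix.mul_neg]
      rw [hD']
      abel
    · simp
  have step2a : V2 * Matrix.fromBlocks X C' D' Em * W2 = Matrix.fromBlocks X 0 0 Atil := by
    rw [hV2, hW2, Matrix.fromBlocks_multiply, Matrix.fromBlocks_multiply,
      Matrix.fromBlocks_inj]
    have h0 : -(D' * X⁻¹) * X + (1 : Matrix (S ⊕ N ⊕ F) (S ⊕ N ⊕ F) ℂ) * D' = 0 := by
      rw [Matrix.neg_mul, Matrix.mul_assoc, hYX, Matrix.mul_one, Matrix.one_mul,
        neg_add_cancel]
    refine ⟨?_, ?_, ?_, ?_⟩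
    · simp
    · simp only [Matrix.one_mul, Matrix.mul_one, Matrix.zero_mul, zero_add, add_zero,
        Matrix.mul_neg]
      rw [← Matrix.mul_assoc, hXY, Matrix.one_mul, neg_add_cancel]
    · rw [h0, Matrix.zero_mul]
      simp
    · rw [h0, Matrix.zero_mul, zero_add, hAtil, Matrix.mul_one, Matrix.one_mul,
        Matrix.neg_mul, Matrix.mul_assoc]
      abel
  have step2b : V3 * Matrix.fromBlocks X 0 0 Atil = Matrix.fromBlocks 1 0 0 Atil := by
    rw [hV3, Matrix.fromBlocks_multiply]
    simp [hYX]
  have key : (V3 * V2 * V1) * A * (W1 * W2) = Matrix.fromBlocks 1 0 0 Atil := by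
    have h : (V3 * V2 * V1) * A * (W1 * W2)
        = V3 * (V2 * (V1 * A * W1) * W2) := by
      simp only [Matrix.mul_assoc]
    rw [h, step1, step2a, step2b]
  -- units
  have uV1 : IsUnit V1 := by
    refine aux_isUnit_of_right_inv (Q := Matrix.fromBlocks 1 Lᴴ 0 1) ?_
    rw [hV1, Matrix.fromBlocks_multiply]
    simp [Matrix.fromBlocks_one]
  have uW1 : IsUnit W1 := by
    refine aux_isUnit_of_right_inv (Q := Matrix.fromBlocks 1 0 L 1) ?_
    rw [hW1, Matrix.fromBlocks_multiply]
    simp [Matrix.fromBlocks_one]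
  have uV2 : IsUnit V2 := by
    refine aux_isUnit_of_right_inv (Q := Matrix.fromBlocks 1 0 (D' * X⁻¹) 1) ?_
    rw [hV2, Matrix.fromBlocks_multiply]
    simp [Matrix.fromBlocks_one]
  have uW2 : IsUnit W2 := by
    refine aux_isUnit_of_right_inv (Q := Matrix.fromBlocks 1 (X⁻¹ * C') 0 1) ?_
    rw [hW2, Matrix.fromBlocks_multiply]
    simp [Matrix.fromBlocks_one]
  have uV3 : IsUnit V3 := by
    refine aux_isUnit_of_right_inv (Q := Matrix.fromBlocks X 0 0 1) ?_
    rw [hV3, Matrix.fromBlocks_multiply]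
    simp [hYX, Matrix.fromBlocks_one]
  have hVu : IsUnit (V3 * V2 * V1) := (uV3.mul uV2).mul uV1
  have hWu : IsUnit (W1 * W2) := uW1.mul uW2
  -- far-field blocks of Atil
  have hD'F : D'.submatrix jF id = 0 := by
    have h1 : (Em * L).submatrix jF id = Em.submatrix jF id * L := by
      simpa using Matrix.submatrix_mul Em L jF id id Function.bijective_id
    have h2 : Em.submatrix jF id * L = A.submatrix inF inS * T := by
      rw [hL, aux_mulL]; rfl
    have h3 : D'.submatrix jF id
        = Dm.submatrix jF id - (Em * L).submatrix jF id := rfl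
    rw [h3, h1, h2]
    have h4 : Dm.submatrix jF id = A.submatrix inF inR := rfl
    rw [h4, hFR, sub_self]
  have hC'F : C'.submatrix id jF = 0 := by
    have h1 : (Lᴴ * Em).submatrix id jF = Lᴴ * Em.submatrix id jF := by
      simpa using Matrix.submatrix_mul Lᴴ Em id id jF Function.bijective_id
    have h2 : Lᴴ * Em.submatrix id jF = Tᴴ * A.submatrix inS inF := by
      rw [hL, aux_Lmul]; rfl
    have h3 : C'.submatrix id jF
        = Cm.submatrix id jF - (Lᴴ * Em).submatrix id jF := rfl
    rw [h3, h1, h2]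
    have h4 : Cm.submatrix id jF = A.submatrix inR inF := rfl
    rw [h4, hRF, sub_self]
  have hAtilF : Atil.submatrix jF id = Em.submatrix jF id := by
    have h1 : (D' * (X⁻¹ * C')).submatrix jF id = D'.submatrix jF id * (X⁻¹ * C') := by
      simpa using Matrix.submatrix_mul D' (X⁻¹ * C') jF id id Function.bijective_id
    have h3 : Atil.submatrix jF id
        = Em.submatrix jF id - (D' * (X⁻¹ * C')).submatrix jF id := rfl
    rw [h3, h1, hD'F, Matrix.zero_mul, sub_zero]
  have hAtilcF : Atil.submatrix id jF = Em.submatrix id jF := by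
    have h1 : (D' * (X⁻¹ * C')).submatrix id jF = D' * (X⁻¹ * C').submatrix id jF := by
      simpa using Matrix.submatrix_mul D' (X⁻¹ * C') id id jF Function.bijective_id
    have h2 : (X⁻¹ * C').submatrix id jF = X⁻¹ * C'.submatrix id jF := by
      simpa using Matrix.submatrix_mul X⁻¹ C' id id jF Function.bijective_id
    have h3 : Atil.submatrix id jF
        = Em.submatrix id jF - (D' * (X⁻¹ * C')).submatrix id jF := rfl
    rw [h3, h1, h2, hC'F, Matrix.mul_zero, Matrix.mul_zero, sub_zero]
  -- determinant relation
  have hdet : (V3 * V2 * V1).det * A.det * (W1 * W2).det = Atil.det := by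
    rw [← Matrix.det_mul, ← Matrix.det_mul, key, Matrix.det_fromBlocks_zero₂₁]
    simp
  have hVdet : IsUnit (V3 * V2 * V1).det := (Matrix.isUnit_iff_isUnit_det _).mp hVu
  have hWdet : IsUnit (W1 * W2).det := (Matrix.isUnit_iff_isUnit_det _).mp hWu
  have iffAA : IsUnit A ↔ IsUnit Atil := by
    rw [Matrix.isUnit_iff_isUnit_det, Matrix.isUnit_iff_isUnit_det, ← hdet]
    constructor
    · intro h
      exact (hVdet.mul h).mul hWdet
    · intro h
      exact isUnit_of_mul_isUnit_right (isUnit_of_mul_isUnit_left h)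
  refine ⟨V3 * V2 * V1, W1 * W2, Atil, hVu, hWu, key, ?_, ?_, ?_, ?_, ?_, iffAA, ?_⟩
  · have h : Atil.submatrix jS jF = (Atil.submatrix id jF).submatrix jS id := rfl
    rw [h, hAtilcF]; rfl
  · have h : Atil.submatrix jN jF = (Atil.submatrix id jF).submatrix jN id := rfl
    rw [h, hAtilcF]; rfl
  · have h : Atil.submatrix jF jS = (Atil.submatrix jF id).submatrix id jS := rfl
    rw [h, hAtilF]; rfl
  · have h : Atil.submatrix jF jN = (Atil.submatrix jF id).submatrix id jN := rfl
    rw [h, hAtilF]; rfl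
  · have h : Atil.submatrix jF jF = (Atil.submatrix jF id).submatrix id jF := rfl
    rw [h, hAtilF]; rfl
  · intro hU
    have hAt : IsUnit Atil := iffAA.mp hU
    have hAtdet : IsUnit Atil.det := (Matrix.isUnit_iff_isUnit_det _).mp hAt
    have hZZ' : Matrix.fromBlocks 1 0 0 Atil
        * Matrix.fromBlocks (1 : Matrix R R ℂ) 0 0 Atil⁻¹ = 1 := by
      rw [Matrix.fromBlocks_multiply]
      simp [Matrix.mul_nonsing_inv Atil hAtdet, Matrix.fromBlocks_one]
    apply Matrix.inv_eq_right_inv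
    have expand : (V3 * V2 * V1) * (A * ((W1 * W2) * Matrix.fromBlocks 1 0 0 Atil⁻¹
          * (V3 * V2 * V1)))
        = ((V3 * V2 * V1) * A * (W1 * W2)) * Matrix.fromBlocks 1 0 0 Atil⁻¹
          * (V3 * V2 * V1) := by
      simp only [Matrix.mul_assoc]
    have hc : (V3 * V2 * V1) * (A * ((W1 * W2) * Matrix.fromBlocks 1 0 0 Atil⁻¹
          * (V3 * V2 * V1))) = (V3 * V2 * V1) * 1 := by
      rw [expand, key, hZZ', Matrix.one_mul, Matrix.mul_one]
    exact hVu.mul_left_cancel hc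
end
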